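/- Let Z ~ N(0, I₂) in ℝ² and let L = {μ : μ₂ = μ₁} ∪ {μ : μ₂ = −μ₁} be the union of the two diagonal lines. Then the squared Euclidean distance d(Z, L)² is distributed as the minimum of two independent χ²₁ random variables; equivalently, P(d(Z,L)² > x) = P(χ²₁ > x)² for all x ≥ 0. -/

import Mathlib

open MeasureTheory ProbabilityTheory

/-- The squared Euclidean distance from a point `x ∈ ℝ²` to a set `S ⊆ ℝ²`. -/
noncomputable def sqDistTo (x : ℝ × ℝ) (S : Set (ℝ × ℝ)) : ℝ :=
  sInf ((fun s => (x.1 - s.1) ^ 2 + (x.2 - s.2) ^ 2) '' S)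

/-- The χ² distribution with `k` degrees of freedom, i.e. `Gamma(k/2, 1/2)`. -/
noncomputable def chiSqMeasure (k : ℝ) : Measure ℝ := gammaMeasure (k / 2) (1 / 2)

namespace Stmt10Aux

open Real Set ENNReal NNReal

noncomputable def Tlin : (ℝ × ℝ) →ₗ[ℝ] (ℝ × ℝ) where
  toFun p := ((p.1 - p.2) / Real.sqrt 2, (p.1 + p.2) / Real.sqrt 2)
  map_add' p q := by ext <;> · simp only [Prod.fst_add, Prod.snd_add]; ring
  map_smul' c p := by
    ext <;> · simp only [Prod.smul_fst, Prod.smul_snd, smul_eq_mul, RingHom.id_apply]; ring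

lemma sqrt2_mul_self : Real.sqrt 2 * Real.sqrt 2 = 2 := Real.mul_self_sqrt (by norm_num)

lemma sqrt2_ne : Real.sqrt 2 ≠ 0 := by positivity

lemma det_Tlin : LinearMap.det Tlin = 1 := by
  rw [← LinearMap.det_toMatrix (Module.Basis.finTwoProd ℝ) Tlin, Matrix.det_fin_two]
  simp only [LinearMap.toMatrix_apply, Module.Basis.finTwoProd_zero, Module.Basis.finTwoProd_one,
    Module.Basis.coe_finTwoProd_repr, Tlin, LinearMap.coe_mk, AddHom.coe_mk]
  simp only [Matrix.cons_val_zero, Matrix.cons_val_one, Matrix.head_cons]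
  have h := sqrt2_mul_self
  have hne := sqrt2_ne
  field_simp; linear_combination -h

noncomputable def Teqv : (ℝ × ℝ) ≃ᵐ (ℝ × ℝ) where
  toFun p := ((p.1 - p.2) / Real.sqrt 2, (p.1 + p.2) / Real.sqrt 2)
  invFun q := ((q.1 + q.2) / Real.sqrt 2, (q.2 - q.1) / Real.sqrt 2)
  left_inv p := by
    have h := sqrt2_mul_self
    have hne := sqrt2_ne
    ext <;> · simp only; field_simp; rw [Real.sq_sqrt (by norm_num : (0:ℝ) ≤ 2)]; ring
  right_inv q := by
    have h := sqrt2_mul_self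
    have hne := sqrt2_ne
    ext <;> · simp only; field_simp; rw [Real.sq_sqrt (by norm_num : (0:ℝ) ≤ 2)]; ring
  measurable_toFun := by
    show Measurable fun p : ℝ × ℝ => ((p.1 - p.2) / Real.sqrt 2, (p.1 + p.2) / Real.sqrt 2)
    fun_prop
  measurable_invFun := by
    show Measurable fun q : ℝ × ℝ => ((q.1 + q.2) / Real.sqrt 2, (q.2 - q.1) / Real.sqrt 2)
    fun_prop

lemma Teqv_coe : ⇑Teqv = ⇑Tlin := rfl

lemma map_Teqv_volume : Measure.map (⇑Teqv) (volume : Measure (ℝ × ℝ)) = volume := by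
  rw [Teqv_coe, Measure.map_linearMap_addHaar_eq_smul_addHaar _ (by rw [det_Tlin]; norm_num)]
  simp [det_Tlin]

lemma map_withDensity_equiv {α β : Type*} [MeasurableSpace α] [MeasurableSpace β]
    (e : α ≃ᵐ β) (μ : Measure α) (f : β → ℝ≥0∞) (hf : Measurable f) :
    Measure.map e (μ.withDensity (f ∘ e)) = (Measure.map e μ).withDensity f := by
  ext s hs
  rw [Measure.map_apply e.measurable hs, withDensity_apply _ (e.measurable hs),
    withDensity_apply _ hs, setLIntegral_map hs hf e.measurable]
  rfl

lemma measurable_gaussianPDF (μ : ℝ) (v : ℝ≥0) : Measurable (gaussianPDF μ v) :=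
  (measurable_gaussianPDFReal μ v).ennreal_ofReal

/-- The product of two standard gaussians as a density w.r.t. Lebesgue on `ℝ × ℝ`. -/
lemma gauss_prod_eq :
    (gaussianReal 0 1).prod (gaussianReal 0 1)
      = (volume : Measure (ℝ × ℝ)).withDensity
          (fun p => gaussianPDF 0 1 p.1 * gaussianPDF 0 1 p.2) := by
  rw [Measure.volume_eq_prod]
  refine Measure.prod_eq fun s t hs ht => ?_
  rw [withDensity_apply _ (hs.prod ht), ← Measure.prod_restrict,
    lintegral_prod_mul ((measurable_gaussianPDF 0 1).aemeasurable)
      ((measurable_gaussianPDF 0 1).aemeasurable),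
    gaussianReal_apply _ one_ne_zero, gaussianReal_apply _ one_ne_zero]

lemma density_invariant :
    (fun p : ℝ × ℝ => gaussianPDF 0 1 p.1 * gaussianPDF 0 1 p.2) ∘ ⇑Teqv
      = fun p : ℝ × ℝ => gaussianPDF 0 1 p.1 * gaussianPDF 0 1 p.2 := by
  funext p
  simp only [Function.comp_apply, Teqv, MeasurableEquiv.coe_mk, Equiv.coe_fn_mk]
  unfold gaussianPDF
  rw [← ENNReal.ofReal_mul (gaussianPDFReal_nonneg _ _ _),
    ← ENNReal.ofReal_mul (gaussianPDFReal_nonneg _ _ _)]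
  congr 1
  simp only [gaussianPDFReal]
  push_cast
  rw [mul_mul_mul_comm]
  conv_rhs => rw [mul_mul_mul_comm]
  rw [← Real.exp_add, ← Real.exp_add]
  have h2 : ((p.1 - p.2) / Real.sqrt 2) ^ 2 + ((p.1 + p.2) / Real.sqrt 2) ^ 2
      = p.1 ^ 2 + p.2 ^ 2 := by
    have hs : Real.sqrt 2 ^ 2 = 2 := Real.sq_sqrt (by norm_num)
    rw [div_pow, div_pow, hs]
    ring
  congr 1
  congr 1
  nlinarith [h2]

lemma map_Teqv_gauss :
    Measure.map (⇑Teqv) ((gaussianReal 0 1).prod (gaussianReal 0 1))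
      = (gaussianReal 0 1).prod (gaussianReal 0 1) := by
  have hf : Measurable (fun p : ℝ × ℝ => gaussianPDF 0 1 p.1 * gaussianPDF 0 1 p.2) :=
    ((measurable_gaussianPDF 0 1).comp measurable_fst).mul
      ((measurable_gaussianPDF 0 1).comp measurable_snd)
  calc Measure.map (⇑Teqv) ((gaussianReal 0 1).prod (gaussianReal 0 1))
      = Measure.map (⇑Teqv) ((volume : Measure (ℝ × ℝ)).withDensity
          ((fun p : ℝ × ℝ => gaussianPDF 0 1 p.1 * gaussianPDF 0 1 p.2) ∘ ⇑Teqv)) := by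
        rw [gauss_prod_eq, density_invariant]
    _ = (Measure.map (⇑Teqv) (volume : Measure (ℝ × ℝ))).withDensity
          (fun p : ℝ × ℝ => gaussianPDF 0 1 p.1 * gaussianPDF 0 1 p.2) :=
        map_withDensity_equiv Teqv _ _ hf
    _ = (gaussianReal 0 1).prod (gaussianReal 0 1) := by
        rw [map_Teqv_volume, ← gauss_prod_eq]

/-- The minimum formula for the squared distance to the two lines. -/
lemma sqDistTo_lines (p : ℝ × ℝ) :
    sqDistTo p ({μ : ℝ × ℝ | μ.2 = μ.1} ∪ {μ : ℝ × ℝ | μ.2 = -μ.1})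
      = min ((p.1 - p.2) ^ 2 / 2) ((p.1 + p.2) ^ 2 / 2) := by
  unfold sqDistTo
  rw [Set.image_union]
  set f : ℝ × ℝ → ℝ := fun s => (p.1 - s.1) ^ 2 + (p.2 - s.2) ^ 2 with hf
  have hmemA : (p.1 - p.2) ^ 2 / 2 ∈ f '' {μ : ℝ × ℝ | μ.2 = μ.1} :=
    ⟨((p.1 + p.2) / 2, (p.1 + p.2) / 2), rfl, by simp only [hf]; ring⟩
  have hlbA : ∀ y ∈ f '' {μ : ℝ × ℝ | μ.2 = μ.1}, (p.1 - p.2) ^ 2 / 2 ≤ y := by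
    rintro y ⟨⟨s1, s2⟩, hs, rfl⟩
    simp only [Set.mem_setOf_eq] at hs
    simp only [hf, hs]
    nlinarith [sq_nonneg (p.1 + p.2 - 2 * s1)]
  have hmemB : (p.1 + p.2) ^ 2 / 2 ∈ f '' {μ : ℝ × ℝ | μ.2 = -μ.1} :=
    ⟨((p.1 - p.2) / 2, -((p.1 - p.2) / 2)), rfl, by simp only [hf]; ring⟩
  have hlbB : ∀ y ∈ f '' {μ : ℝ × ℝ | μ.2 = -μ.1}, (p.1 + p.2) ^ 2 / 2 ≤ y := by
    rintro y ⟨⟨s1, s2⟩, hs, rfl⟩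
    simp only [Set.mem_setOf_eq] at hs
    simp only [hf, hs]
    nlinarith [sq_nonneg (p.1 - p.2 - 2 * s1)]
  have hA : sInf (f '' {μ : ℝ × ℝ | μ.2 = μ.1}) = (p.1 - p.2) ^ 2 / 2 :=
    le_antisymm (csInf_le ⟨_, hlbA⟩ hmemA) (le_csInf ⟨_, hmemA⟩ hlbA)
  have hB : sInf (f '' {μ : ℝ × ℝ | μ.2 = -μ.1}) = (p.1 + p.2) ^ 2 / 2 :=
    le_antisymm (csInf_le ⟨_, hlbB⟩ hmemB) (le_csInf ⟨_, hmemB⟩ hlbB)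
  rw [csInf_union ⟨_, hlbA⟩ ⟨_, hmemA⟩ ⟨_, hlbB⟩ ⟨_, hmemB⟩, hA, hB]

lemma pointwise_gamma_gauss {a u : ℝ} (ha0 : 0 ≤ a) (hu : u ∈ Set.Ioi a) :
    ENNReal.ofReal |((1 : ℝ →L[ℝ] ℝ).smulRight (2 * u)).det| * gammaPDF (1/2) (1/2) (u ^ 2)
      = 2 * gaussianPDF 0 1 u := by
  have hu0 : 0 < u := lt_of_le_of_lt ha0 hu
  rw [ContinuousLinearMap.smulRight_one_eq_toSpanSingleton, ContinuousLinearMap.det_toSpanSingleton, abs_of_pos (by linarith : (0:ℝ) < 2 * u),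
    gammaPDF_of_nonneg (sq_nonneg u), gaussianPDF]
  rw [show (2 : ℝ≥0∞) = ENNReal.ofReal 2 by simp, ← ENNReal.ofReal_mul (by linarith),
    ← ENNReal.ofReal_mul (by norm_num)]
  congr 1
  have h1 : ((1:ℝ)/2) ^ ((1:ℝ)/2) = (Real.sqrt 2)⁻¹ := by
    rw [← Real.sqrt_eq_rpow, one_div, Real.sqrt_inv]
  have h2 : ((u:ℝ) ^ 2) ^ ((1:ℝ)/2 - 1) = u⁻¹ := by
    have he : (1:ℝ)/2 - 1 = -(1/2) := by norm_num
    rw [he, Real.rpow_neg (sq_nonneg u), ← Real.sqrt_eq_rpow, Real.sqrt_sq hu0.le]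
  have h3 : Real.sqrt (2 * Real.pi * ((1:ℝ≥0):ℝ)) = Real.sqrt 2 * Real.sqrt Real.pi := by
    rw [NNReal.coe_one, mul_one, Real.sqrt_mul (by norm_num)]
  have hexp : Real.exp (-((1:ℝ)/2 * u ^ 2)) = Real.exp (-(u - 0) ^ 2 / (2 * ((1:ℝ≥0):ℝ))) := by
    norm_num
    ring_nf
  rw [gaussianPDFReal, h1, h2, Real.Gamma_one_half_eq, h3, ← hexp]
  have hπ : Real.sqrt Real.pi ≠ 0 := by positivity
  field_simp

/-- χ²₁ tail equals the gaussian tail of the square. -/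
lemma chiSq_eq_gauss_sq {x : ℝ} (hx : 0 ≤ x) :
    chiSqMeasure 1 (Set.Ioi x) = gaussianReal 0 1 {u : ℝ | x < u ^ 2} := by
  set a := Real.sqrt x with ha
  have ha0 : 0 ≤ a := Real.sqrt_nonneg x
  have hax : a ^ 2 = x := Real.sq_sqrt hx
  have hAset : {u : ℝ | x < u ^ 2} = Iio (-a) ∪ Ioi a := by
    ext u
    simp only [mem_setOf_eq, mem_union, mem_Iio, mem_Ioi]
    constructor
    · intro h
      have h' : a < |u| := by
        have h'' := Real.sqrt_lt_sqrt hx h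
        rwa [Real.sqrt_sq_eq_abs] at h''
      rcases lt_abs.mp h' with h1 | h1
      · exact Or.inr h1
      · exact Or.inl (by linarith)
    · rintro (h | h) <;> nlinarith
  have hneg : Measure.map (fun u : ℝ => -1 * u) (gaussianReal 0 1) = gaussianReal 0 1 := by
    rw [gaussianReal_map_const_mul (-1)]
    have h : (⟨(-1:ℝ)^2, sq_nonneg _⟩ : ℝ≥0) * 1 = 1 := by
      ext; norm_num
    refine congrArg₂ gaussianReal (by norm_num) (NNReal.eq ?_)
    norm_num
  have hsym : gaussianReal 0 1 (Iio (-a)) = gaussianReal 0 1 (Ioi a) := by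
    have hpre : (fun u : ℝ => -1 * u) ⁻¹' (Iio (-a)) = Ioi a := by
      ext u
      simp only [mem_preimage, mem_Iio, mem_Ioi]
      constructor <;> intro <;> linarith
    calc gaussianReal 0 1 (Iio (-a))
        = (Measure.map (fun u : ℝ => -1 * u) (gaussianReal 0 1)) (Iio (-a)) := by rw [hneg]
      _ = gaussianReal 0 1 ((fun u : ℝ => -1 * u) ⁻¹' (Iio (-a))) :=
          Measure.map_apply (by fun_prop) measurableSet_Iio
      _ = gaussianReal 0 1 (Ioi a) := by rw [hpre]
  have hdisj : Disjoint (Iio (-a)) (Ioi a) := by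
    apply Set.disjoint_left.mpr
    intro u h1 h2
    simp only [mem_Iio] at h1
    simp only [mem_Ioi] at h2
    linarith
  have hunion : gaussianReal 0 1 {u : ℝ | x < u ^ 2} = 2 * gaussianReal 0 1 (Ioi a) := by
    rw [hAset, measure_union hdisj measurableSet_Ioi, hsym, two_mul]
  have himg : (fun u : ℝ => u ^ 2) '' (Ioi a) = Ioi x := by
    ext t
    simp only [mem_image, mem_Ioi]
    constructor
    · rintro ⟨u, hu, rfl⟩; nlinarith
    · intro ht
      refine ⟨Real.sqrt t, ?_, Real.sq_sqrt (le_trans hx ht.le)⟩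
      rw [ha]
      exact Real.sqrt_lt_sqrt hx ht
  have hder : ∀ u ∈ Ioi a, HasFDerivWithinAt (fun u : ℝ => u ^ 2)
      ((1 : ℝ →L[ℝ] ℝ).smulRight (2 * u)) (Ioi a) u := by
    intro u _
    have h := ((hasDerivAt_pow 2 u).hasDerivWithinAt (s := Ioi a)).hasFDerivWithinAt
    simpa [ContinuousLinearMap.smulRight_one_eq_toSpanSingleton] using h
  have hinj : InjOn (fun u : ℝ => u ^ 2) (Ioi a) := by
    intro u hu v hv h
    simp only [mem_Ioi] at hu hv
    simp only at h
    apply le_antisymm <;> nlinarith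
  have hchange := lintegral_image_eq_lintegral_abs_det_fderiv_mul volume measurableSet_Ioi
    hder hinj (gammaPDF (1/2) (1/2))
  rw [himg] at hchange
  calc chiSqMeasure 1 (Set.Ioi x)
      = ∫⁻ t in Ioi x, gammaPDF (1/2) (1/2) t := by
        rw [show chiSqMeasure 1 = gammaMeasure (1/2) (1/2) from rfl, gammaMeasure,
          withDensity_apply _ measurableSet_Ioi]
    _ = ∫⁻ u in Ioi a, ENNReal.ofReal |((1 : ℝ →L[ℝ] ℝ).smulRight (2 * u)).det|
          * gammaPDF (1/2) (1/2) (u ^ 2) := hchange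
    _ = ∫⁻ u in Ioi a, 2 * gaussianPDF 0 1 u :=
        setLIntegral_congr_fun measurableSet_Ioi
          (fun u hu => pointwise_gamma_gauss ha0 hu)
    _ = 2 * ∫⁻ u in Ioi a, gaussianPDF 0 1 u :=
        lintegral_const_mul 2 (measurable_gaussianPDF 0 1)
    _ = 2 * gaussianReal 0 1 (Ioi a) := by rw [gaussianReal_apply _ one_ne_zero]
    _ = gaussianReal 0 1 {u : ℝ | x < u ^ 2} := hunion.symm

end Stmt10Aux

open Stmt10Aux

/-- For `Z ~ N(0, I₂)` and `L` the union of the lines `μ₂ = μ₁` and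
`μ₂ = −μ₁`, the squared distance `d(Z, L)²` is distributed as the minimum of two
independent `χ²₁` random variables: `P(d(Z,L)² > x) = P(χ²₁ > x)²` for all `x ≥ 0`. -/
theorem stmt10 {Ω : Type*} [MeasureSpace Ω] (hP : IsProbabilityMeasure (ℙ : Measure Ω))
    (Z : Ω → ℝ × ℝ)
    (h1 : Measure.map (fun ω => (Z ω).1) ℙ = gaussianReal 0 1)
    (h2 : Measure.map (fun ω => (Z ω).2) ℙ = gaussianReal 0 1)
    (hind : IndepFun (fun ω => (Z ω).1) (fun ω => (Z ω).2) ℙ) :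
    ∀ x : ℝ, 0 ≤ x →
      (ℙ {ω | x < sqDistTo (Z ω) ({μ : ℝ × ℝ | μ.2 = μ.1} ∪ {μ : ℝ × ℝ | μ.2 = -μ.1})}).toReal
        = ((chiSqMeasure 1 (Set.Ioi x)).toReal) ^ 2 := by
  intro x hx
  -- a.e.-measurability of the coordinates
  have hZ1 : AEMeasurable (fun ω => (Z ω).1) ℙ := by
    by_contra h
    have h0 : (gaussianReal 0 1) Set.univ = 1 := measure_univ
    rw [← h1, Measure.map_of_not_aemeasurable h] at h0
    simp at h0
  have hZ2 : AEMeasurable (fun ω => (Z ω).2) ℙ := by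
    by_contra h
    have h0 : (gaussianReal 0 1) Set.univ = 1 := measure_univ
    rw [← h2, Measure.map_of_not_aemeasurable h] at h0
    simp at h0
  have hZ : AEMeasurable Z ℙ := hZ1.prodMk hZ2
  -- the joint law is the product of standard gaussians
  have hjoint : Measure.map Z ℙ = (gaussianReal 0 1).prod (gaussianReal 0 1) := by
    have := (indepFun_iff_map_prod_eq_prod_map_map hZ1 hZ2).mp hind
    rw [h1, h2] at this
    exact this
  -- the event, rewritten via the rotation
  set A : Set ℝ := {u : ℝ | x < u ^ 2} with hA_def
  have hA_meas : MeasurableSet A := measurableSet_lt measurable_const (by fun_prop)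
  have hset : {p : ℝ × ℝ |
      x < sqDistTo p ({μ : ℝ × ℝ | μ.2 = μ.1} ∪ {μ : ℝ × ℝ | μ.2 = -μ.1})}
      = ⇑Teqv ⁻¹' (A ×ˢ A) := by
    ext p
    have e1 : ((p.1 - p.2) / Real.sqrt 2) ^ 2 = (p.1 - p.2) ^ 2 / 2 := by
      rw [div_pow, Real.sq_sqrt (by norm_num : (0:ℝ) ≤ 2)]
    have e2 : ((p.1 + p.2) / Real.sqrt 2) ^ 2 = (p.1 + p.2) ^ 2 / 2 := by
      rw [div_pow, Real.sq_sqrt (by norm_num : (0:ℝ) ≤ 2)]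
    simp only [Set.mem_setOf_eq, sqDistTo_lines, lt_min_iff, Set.mem_preimage, Set.mem_prod,
      Teqv, MeasurableEquiv.coe_mk, Equiv.coe_fn_mk, hA_def, e1, e2]
  have hSmeas : MeasurableSet (⇑Teqv ⁻¹' (A ×ˢ A)) :=
    Teqv.measurable (hA_meas.prod hA_meas)
  have key : ℙ {ω | x < sqDistTo (Z ω)
      ({μ : ℝ × ℝ | μ.2 = μ.1} ∪ {μ : ℝ × ℝ | μ.2 = -μ.1})}
      = gaussianReal 0 1 A * gaussianReal 0 1 A := by
    have : {ω | x < sqDistTo (Z ω)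
        ({μ : ℝ × ℝ | μ.2 = μ.1} ∪ {μ : ℝ × ℝ | μ.2 = -μ.1})}
        = Z ⁻¹' (⇑Teqv ⁻¹' (A ×ˢ A)) := by
      rw [← hset]; rfl
    rw [this, ← Measure.map_apply_of_aemeasurable hZ hSmeas, hjoint,
      ← Measure.map_apply Teqv.measurable (hA_meas.prod hA_meas), map_Teqv_gauss,
      Measure.prod_prod]
  rw [key, chiSq_eq_gauss_sq hx, ENNReal.toReal_mul, sq]
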